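/- (Theorem 3, maximum value) Let 0 < r_1 < r_2 < r_3 and let t be the unique positive real root of the cubic equation 2 r_1 r_2 r_3 t³ + (r_1² r_2² + r_2² r_3² + r_3² r_1²) t² − r_1² r_2² r_3² = 0. Then the maximum of the perimeter L over all configurations (α_1, α_2, α_3) equals L_M = √(r_1² + r_2² + 2 t r_1 r_2 / r_3) + √(r_1² + r_3² + 2 t r_1 r_3 / r_2) + √(r_2² + r_3² + 2 t r_2 r_3 / r_1). -/

import Mathlib

open Real

/-- Length of the chordal segment between points at radii `r`, `r'` whose polar angles
differ by `θ`. -/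
noncomputable def ell (r r' θ : ℝ) : ℝ :=
  Real.sqrt (r ^ 2 + r' ^ 2 - 2 * r * r' * Real.cos θ)

/-- The perimeter `L = |p₁ − p₂| + |p₂ − p₃| + |p₃ − p₁|` of the connecting cycle for three
concentric circles of radii `r1, r2, r3` with vertices at polar angles `a1, a2, a3`. -/
noncomputable def L3full (r1 r2 r3 a1 a2 a3 : ℝ) : ℝ :=
  ell r1 r2 (a2 - a1) + ell r2 r3 (a3 - a2) + ell r3 r1 (a1 - a3)

set_option maxHeartbeats 2000000 in
/-- Theorem 3, maximum value: for `0 < r1 < r2 < r3`, if `t` is the (unique)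
positive real root of `2 r1 r2 r3 t³ + (r1² r2² + r2² r3² + r3² r1²) t² − r1² r2² r3² = 0`,
then the maximum of the perimeter over all configurations equals
`√(r1² + r2² + 2 t r1 r2/r3) + √(r1² + r3² + 2 t r1 r3/r2) + √(r2² + r3² + 2 t r2 r3/r1)`. -/
theorem stmt_11 (r1 r2 r3 : ℝ) (h1 : 0 < r1) (h12 : r1 < r2) (h23 : r2 < r3)
    (t : ℝ) (ht : 0 < t)
    (hroot : 2 * r1 * r2 * r3 * t ^ 3 +
      (r1 ^ 2 * r2 ^ 2 + r2 ^ 2 * r3 ^ 2 + r3 ^ 2 * r1 ^ 2) * t ^ 2 -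
      r1 ^ 2 * r2 ^ 2 * r3 ^ 2 = 0) :
    IsGreatest (Set.range fun q : ℝ × ℝ × ℝ => L3full r1 r2 r3 q.1 q.2.1 q.2.2)
      (Real.sqrt (r1 ^ 2 + r2 ^ 2 + 2 * t * r1 * r2 / r3) +
       Real.sqrt (r1 ^ 2 + r3 ^ 2 + 2 * t * r1 * r3 / r2) +
       Real.sqrt (r2 ^ 2 + r3 ^ 2 + 2 * t * r2 * r3 / r1)) := by
  have h2 : 0 < r2 := h1.trans h12
  have h3 : 0 < r3 := h2.trans h23
  have h1' := h1.ne'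
  have h2' := h2.ne'
  have h3' := h3.ne'
  have ht' := ht.ne'
  -- t < r1
  have htr1 : t < r1 := by
    by_contra h
    push_neg at h
    have h4 : r1 ^ 2 ≤ t ^ 2 := by
      have := mul_le_mul h h h1.le (h1.le.trans h)
      nlinarith [this]
    have h5 : r2 ^ 2 * r3 ^ 2 * r1 ^ 2 ≤ r2 ^ 2 * r3 ^ 2 * t ^ 2 :=
      mul_le_mul_of_nonneg_left h4 (by positivity)
    have h6 : (0:ℝ) < 2 * r1 * r2 * r3 * t ^ 3 := by positivity
    have h7 : (0:ℝ) < (r1 ^ 2 * r2 ^ 2 + r3 ^ 2 * r1 ^ 2) * t ^ 2 := by positivity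
    linarith [hroot, h5, h6, h7]
  have htr2 : t < r2 := htr1.trans h12
  have htr3 : t < r3 := htr2.trans h23
  -- positivity of radicands
  have hP1 : (0:ℝ) < r1 ^ 2 + r2 ^ 2 + 2 * t * r1 * r2 / r3 := by positivity
  have hP2 : (0:ℝ) < r1 ^ 2 + r3 ^ 2 + 2 * t * r1 * r3 / r2 := by positivity
  have hP3 : (0:ℝ) < r2 ^ 2 + r3 ^ 2 + 2 * t * r2 * r3 / r1 := by positivity
  set l1 := Real.sqrt (r1 ^ 2 + r2 ^ 2 + 2 * t * r1 * r2 / r3) with hl1def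
  set l2 := Real.sqrt (r1 ^ 2 + r3 ^ 2 + 2 * t * r1 * r3 / r2) with hl2def
  set l3 := Real.sqrt (r2 ^ 2 + r3 ^ 2 + 2 * t * r2 * r3 / r1) with hl3def
  have hl1sq : l1 ^ 2 = r1 ^ 2 + r2 ^ 2 + 2 * t * r1 * r2 / r3 := Real.sq_sqrt hP1.le
  have hl2sq : l2 ^ 2 = r1 ^ 2 + r3 ^ 2 + 2 * t * r1 * r3 / r2 := Real.sq_sqrt hP2.le
  have hl3sq : l3 ^ 2 = r2 ^ 2 + r3 ^ 2 + 2 * t * r2 * r3 / r1 := Real.sq_sqrt hP3.le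
  have hl1pos : 0 < l1 := Real.sqrt_pos.mpr hP1
  have hl2pos : 0 < l2 := Real.sqrt_pos.mpr hP2
  have hl3pos : 0 < l3 := Real.sqrt_pos.mpr hP3
  -- cleared square identities
  have hl1' : r3 * l1 ^ 2 = r3 * (r1 ^ 2 + r2 ^ 2) + 2 * t * r1 * r2 := by
    rw [hl1sq]; field_simp
  have hl2' : r2 * l2 ^ 2 = r2 * (r1 ^ 2 + r3 ^ 2) + 2 * t * r1 * r3 := by
    rw [hl2sq]; field_simp
  have hl3' : r1 * l3 ^ 2 = r1 * (r2 ^ 2 + r3 ^ 2) + 2 * t * r2 * r3 := by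
    rw [hl3sq]; field_simp
  -- product identities
  have hA1 : t * (l2 * l3) = r3 * (r1 * r2 + t * r3) := by
    rw [hl2def, hl3def, ← Real.sqrt_mul hP2.le,
      show (r1 ^ 2 + r3 ^ 2 + 2 * t * r1 * r3 / r2) * (r2 ^ 2 + r3 ^ 2 + 2 * t * r2 * r3 / r1)
        = (r3 * (r1 * r2 + t * r3) / t) ^ 2 by
          field_simp; linear_combination (2 * t * r3 + r1 * r2) * hroot,
      Real.sqrt_sq (by positivity)]
    field_simp
  have hA2 : t * (l1 * l3) = r2 * (r1 * r3 + t * r2) := by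
    rw [hl1def, hl3def, ← Real.sqrt_mul hP1.le,
      show (r1 ^ 2 + r2 ^ 2 + 2 * t * r1 * r2 / r3) * (r2 ^ 2 + r3 ^ 2 + 2 * t * r2 * r3 / r1)
        = (r2 * (r1 * r3 + t * r2) / t) ^ 2 by
          field_simp; linear_combination (2 * t * r2 + r1 * r3) * hroot,
      Real.sqrt_sq (by positivity)]
    field_simp
  have hA3 : t * (l1 * l2) = r1 * (r2 * r3 + t * r1) := by
    rw [hl1def, hl2def, ← Real.sqrt_mul hP1.le,
      show (r1 ^ 2 + r2 ^ 2 + 2 * t * r1 * r2 / r3) * (r1 ^ 2 + r3 ^ 2 + 2 * t * r1 * r3 / r2)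
        = (r1 * (r2 * r3 + t * r1) / t) ^ 2 by
          field_simp; linear_combination (2 * t * r1 + r2 * r3) * hroot,
      Real.sqrt_sq (by positivity)]
    field_simp
  constructor
  · -- membership: the maximum is attained
    refine ⟨⟨0, Real.arccos (-(t / r3)), Real.arccos (-(t / r3)) + Real.arccos (-(t / r1))⟩, ?_⟩
    set b3 := Real.arccos (-(t / r3)) with hb3def
    set b1 := Real.arccos (-(t / r1)) with hb1def
    have hb3lo : (-1:ℝ) ≤ -(t / r3) := by
      rw [neg_le_neg_iff, div_le_one h3]; linarith
    have hb3hi : -(t / r3) ≤ 1 := by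
      have : (0:ℝ) < t / r3 := by positivity
      linarith
    have hb1lo : (-1:ℝ) ≤ -(t / r1) := by
      rw [neg_le_neg_iff, div_le_one h1]; linarith
    have hb1hi : -(t / r1) ≤ 1 := by
      have : (0:ℝ) < t / r1 := by positivity
      linarith
    have hcb3 : Real.cos b3 = -(t / r3) := Real.cos_arccos hb3lo hb3hi
    have hcb1 : Real.cos b1 = -(t / r1) := Real.cos_arccos hb1lo hb1hi
    have hcb13 : Real.cos (b3 + b1) = -(t / r2) := by
      rw [Real.cos_add, hb3def, hb1def, Real.cos_arccos hb3lo hb3hi,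
        Real.cos_arccos hb1lo hb1hi, Real.sin_arccos, Real.sin_arccos]
      have hs : Real.sqrt (1 - (-(t / r3)) ^ 2) * Real.sqrt (1 - (-(t / r1)) ^ 2)
          = t / r3 * (t / r1) + t / r2 := by
        have hnn : (0:ℝ) ≤ 1 - (-(t / r3)) ^ 2 := by
          have ht3 : t / r3 ≤ 1 := by rw [div_le_one h3]; linarith
          have ht3' : (0:ℝ) ≤ t / r3 := by positivity
          linarith [mul_le_mul ht3 ht3 ht3' (by linarith : (0:ℝ) ≤ (1:ℝ)), sq_nonneg (t/r3), sq_abs (t/r3)]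
        rw [← Real.sqrt_mul hnn,
          show (1 - (-(t / r3)) ^ 2) * (1 - (-(t / r1)) ^ 2)
            = (t / r3 * (t / r1) + t / r2) ^ 2 by
              field_simp; linear_combination (-1) * hroot,
          Real.sqrt_sq (by positivity)]
      rw [hs]
      field_simp
      ring
    simp only [L3full, ell]
    rw [show b3 - 0 = b3 by ring, show b3 + b1 - b3 = b1 by ring,
      show (0:ℝ) - (b3 + b1) = -(b3 + b1) by ring, Real.cos_neg,
      hcb3, hcb1, hcb13]
    rw [show r1 ^ 2 + r2 ^ 2 - 2 * r1 * r2 * -(t / r3) = r1 ^ 2 + r2 ^ 2 + 2 * t * r1 * r2 / r3 by ring,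
      show r2 ^ 2 + r3 ^ 2 - 2 * r2 * r3 * -(t / r1) = r2 ^ 2 + r3 ^ 2 + 2 * t * r2 * r3 / r1 by ring,
      show r3 ^ 2 + r1 ^ 2 - 2 * r3 * r1 * -(t / r2) = r1 ^ 2 + r3 ^ 2 + 2 * t * r1 * r3 / r2 by ring]
    rw [← hl1def, ← hl2def, ← hl3def]
    ring
  · -- upper bound
    rintro x ⟨⟨a1, a2, a3⟩, rfl⟩
    simp only [L3full, ell]
    rw [Real.cos_sub, Real.cos_sub, Real.cos_sub]
    set E1 := r1 ^ 2 + r2 ^ 2 - 2 * r1 * r2 * (Real.cos a2 * Real.cos a1 + Real.sin a2 * Real.sin a1) with hE1def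
    set E23 := r2 ^ 2 + r3 ^ 2 - 2 * r2 * r3 * (Real.cos a3 * Real.cos a2 + Real.sin a3 * Real.sin a2) with hE23def
    set E13 := r3 ^ 2 + r1 ^ 2 - 2 * r3 * r1 * (Real.cos a1 * Real.cos a3 + Real.sin a1 * Real.sin a3) with hE13def
    have hE1nn : (0:ℝ) ≤ E1 := by
      have : E1 = (r1 * Real.cos a1 - r2 * Real.cos a2) ^ 2 + (r1 * Real.sin a1 - r2 * Real.sin a2) ^ 2 := by
        linear_combination (-(r1 ^ 2)) * (Real.sin_sq_add_cos_sq a1) + (-(r2 ^ 2)) * (Real.sin_sq_add_cos_sq a2)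
      rw [this]; positivity
    have hE23nn : (0:ℝ) ≤ E23 := by
      have : E23 = (r2 * Real.cos a2 - r3 * Real.cos a3) ^ 2 + (r2 * Real.sin a2 - r3 * Real.sin a3) ^ 2 := by
        linear_combination (-(r2 ^ 2)) * (Real.sin_sq_add_cos_sq a2) + (-(r3 ^ 2)) * (Real.sin_sq_add_cos_sq a3)
      rw [this]; positivity
    have hE13nn : (0:ℝ) ≤ E13 := by
      have : E13 = (r3 * Real.cos a3 - r1 * Real.cos a1) ^ 2 + (r3 * Real.sin a3 - r1 * Real.sin a1) ^ 2 := by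
        linear_combination (-(r3 ^ 2)) * (Real.sin_sq_add_cos_sq a3) + (-(r1 ^ 2)) * (Real.sin_sq_add_cos_sq a1)
      rw [this]; positivity
    set e1 := Real.sqrt E1 with he1def
    set e23 := Real.sqrt E23 with he23def
    set e13 := Real.sqrt E13 with he13def
    have he1sq : e1 ^ 2 = E1 := Real.sq_sqrt hE1nn
    have he23sq : e23 ^ 2 = E23 := Real.sq_sqrt hE23nn
    have he13sq : e13 ^ 2 = E13 := Real.sq_sqrt hE13nn
    have c1 : 2 * l1 * e1 ≤ l1 ^ 2 + E1 := by linarith [sq_nonneg (e1 - l1), he1sq]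
    have c23 : 2 * l3 * e23 ≤ l3 ^ 2 + E23 := by linarith [sq_nonneg (e23 - l3), he23sq]
    have c13 : 2 * l2 * e13 ≤ l2 ^ 2 + E13 := by linarith [sq_nonneg (e13 - l2), he13sq]
    set X := l3 * r1 * Real.cos a1 + l2 * r2 * Real.cos a2 + l1 * r3 * Real.cos a3 with hXdef
    set Y := l3 * r1 * Real.sin a1 + l2 * r2 * Real.sin a2 + l1 * r3 * Real.sin a3 with hYdef
    have key2 : r1 * r2 * r3 * ((r3 * (r1 * r2 + t * r3)) * (E1 - l1 ^ 2)
        + (r2 * (r1 * r3 + t * r2)) * (E13 - l2 ^ 2)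
        + (r1 * (r2 * r3 + t * r1)) * (E23 - l3 ^ 2))
        = -(t * r1 * r2 * r3 * (X ^ 2 + Y ^ 2)) := by
      rw [hE1def, hE13def, hE23def, hXdef, hYdef]
      linear_combination
        (2 * r1 ^ 2 * r2 ^ 2 * r3 * (Real.cos a1 * Real.cos a2 + Real.sin a1 * Real.sin a2)) * hA1
        + (2 * r1 ^ 2 * r2 * r3 ^ 2 * (Real.cos a1 * Real.cos a3 + Real.sin a1 * Real.sin a3)) * hA2
        + (2 * r1 * r2 ^ 2 * r3 ^ 2 * (Real.cos a2 * Real.cos a3 + Real.sin a2 * Real.sin a3)) * hA3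
        + (t * r1 ^ 3 * r2 * r3 * l3 ^ 2) * (Real.sin_sq_add_cos_sq a1)
        + (t * r1 * r2 ^ 3 * r3 * l2 ^ 2) * (Real.sin_sq_add_cos_sq a2)
        + (t * r1 * r2 * r3 ^ 3 * l1 ^ 2) * (Real.sin_sq_add_cos_sq a3)
        + (t * r1 * r2 * r3 ^ 2 - r1 * r2 * (r3 * (r1 * r2 + t * r3))) * hl1'
        + (t * r1 * r2 ^ 2 * r3 - r1 * r3 * (r2 * (r1 * r3 + t * r2))) * hl2'
        + (t * r1 ^ 2 * r2 * r3 - r2 * r3 * (r1 * (r2 * r3 + t * r1))) * hl3'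
    have hXY : (0:ℝ) ≤ t * r1 * r2 * r3 * (X ^ 2 + Y ^ 2) := by positivity
    have m_pos : (0:ℝ) < 2 * t * r1 * r2 * r3 * (l1 * l2 * l3) := by positivity
    refine le_of_mul_le_mul_left ?_ m_pos
    have d1 : (r1 * r2 * r3 * (r3 * (r1 * r2 + t * r3))) * (2 * l1 * e1)
        ≤ (r1 * r2 * r3 * (r3 * (r1 * r2 + t * r3))) * (l1 ^ 2 + E1) :=
      mul_le_mul_of_nonneg_left c1 (by positivity)
    have d23 : (r1 * r2 * r3 * (r1 * (r2 * r3 + t * r1))) * (2 * l3 * e23)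
        ≤ (r1 * r2 * r3 * (r1 * (r2 * r3 + t * r1))) * (l3 ^ 2 + E23) :=
      mul_le_mul_of_nonneg_left c23 (by positivity)
    have d13 : (r1 * r2 * r3 * (r2 * (r1 * r3 + t * r2))) * (2 * l2 * e13)
        ≤ (r1 * r2 * r3 * (r2 * (r1 * r3 + t * r2))) * (l2 ^ 2 + E13) :=
      mul_le_mul_of_nonneg_left c13 (by positivity)
    calc 2 * t * r1 * r2 * r3 * (l1 * l2 * l3) * (e1 + e23 + e13)
        = (r1 * r2 * r3 * (r3 * (r1 * r2 + t * r3))) * (2 * l1 * e1)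
          + (r1 * r2 * r3 * (r1 * (r2 * r3 + t * r1))) * (2 * l3 * e23)
          + (r1 * r2 * r3 * (r2 * (r1 * r3 + t * r2))) * (2 * l2 * e13) := by
          linear_combination (2 * r1 * r2 * r3 * l1 * e1) * hA1
            + (2 * r1 * r2 * r3 * l3 * e23) * hA3
            + (2 * r1 * r2 * r3 * l2 * e13) * hA2
      _ ≤ (r1 * r2 * r3 * (r3 * (r1 * r2 + t * r3))) * (l1 ^ 2 + E1)
          + (r1 * r2 * r3 * (r1 * (r2 * r3 + t * r1))) * (l3 ^ 2 + E23)
          + (r1 * r2 * r3 * (r2 * (r1 * r3 + t * r2))) * (l2 ^ 2 + E13) := by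
          exact add_le_add (add_le_add d1 d23) d13
      _ = 2 * t * r1 * r2 * r3 * (l1 * l2 * l3) * (l1 + l2 + l3)
          + r1 * r2 * r3 * ((r3 * (r1 * r2 + t * r3)) * (E1 - l1 ^ 2)
            + (r2 * (r1 * r3 + t * r2)) * (E13 - l2 ^ 2)
            + (r1 * (r2 * r3 + t * r1)) * (E23 - l3 ^ 2)) := by
          linear_combination (-(2 * r1 * r2 * r3 * l1 ^ 2)) * hA1
            + (-(2 * r1 * r2 * r3 * l2 ^ 2)) * hA2
            + (-(2 * r1 * r2 * r3 * l3 ^ 2)) * hA3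
      _ = 2 * t * r1 * r2 * r3 * (l1 * l2 * l3) * (l1 + l2 + l3)
          - t * r1 * r2 * r3 * (X ^ 2 + Y ^ 2) := by
          linear_combination key2
      _ ≤ 2 * t * r1 * r2 * r3 * (l1 * l2 * l3) * (l1 + l2 + l3) := by linarith
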